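/- Let α = (3 − √5)/2. For every j ≥ 0 and every index n with 0 ≤ n < |s_j|, the n-th letter (0-indexed) of the finite Fibonacci word s_j equals ⌊(n+2)α⌋ − ⌊(n+1)α⌋. In particular, the infinite Fibonacci word (the limit of the s_j) is the characteristic Sturmian word u with u_n = ⌊(n+2)α⌋ − ⌊(n+1)α⌋. -/

import Mathlib

/-- The finite Fibonacci words: `s 0 = 0`, `s 1 = 01`, `s (j+2) = s (j+1) ++ s j`. -/
def fibWord : ℕ → List ℕ
  | 0 => [0]
  | 1 => [0, 1]
  | (j + 2) => fibWord (j + 1) ++ fibWord j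

noncomputable def fψ : ℝ := (1 - Real.sqrt 5) / 2
noncomputable def fα : ℝ := (3 - Real.sqrt 5) / 2

lemma s5_sq : Real.sqrt 5 ^ 2 = 5 := Real.sq_sqrt (by norm_num)
lemma s5_lb : 2.23 < Real.sqrt 5 := by nlinarith [s5_sq, Real.sqrt_nonneg 5]
lemma s5_ub : Real.sqrt 5 < 2.24 := by nlinarith [s5_sq, Real.sqrt_nonneg 5]
lemma fψ_sq : fψ ^ 2 = fψ + 1 := by
  have := s5_sq; unfold fψ; ring_nf; nlinarith
lemma fα_eq : fα = fψ + 1 := by unfold fα fψ; ring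
lemma abs_fψ : |fψ| = (Real.sqrt 5 - 1) / 2 := by
  rw [abs_of_neg]; · unfold fψ; ring
  · unfold fψ; nlinarith [s5_lb]
lemma abs_fψ_lt_one : |fψ| < 1 := by rw [abs_fψ]; nlinarith [s5_ub]
lemma abs_fψ_pos : 0 < |fψ| := by rw [abs_fψ]; nlinarith [s5_lb]
lemma one_sub_abs_fψ : 1 - |fψ| = fα := by rw [abs_fψ]; unfold fα; ring
lemma abs_fψ_ub : |fψ| ≤ 0.62 := by rw [abs_fψ]; nlinarith [s5_ub]

lemma fib_mul_alpha : ∀ k : ℕ, (Nat.fib (k+2) : ℝ) * fα = (Nat.fib k : ℝ) + fψ ^ (k+2) := by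
  intro k
  induction k using Nat.twoStepInduction with
  | zero => simp [fα_eq, ← fψ_sq]
  | one =>
    have h3 : fψ ^ 3 = 2 * fψ + 1 := by nlinarith [fψ_sq]
    norm_num [Nat.fib, h3, fα_eq]; ring
  | more k ih1 ih2 =>
    have hf : Nat.fib (k+4) = Nat.fib (k+2) + Nat.fib (k+3) := Nat.fib_add_two
    have hψ : fψ ^ (k+4) = fψ ^ (k+2) + fψ ^ (k+3) := by
      have : fψ ^ (k+4) = fψ ^ (k+2) * fψ ^ 2 := by ring
      rw [this, fψ_sq]; ring
    have hf2 : Nat.fib (k+2) = Nat.fib k + Nat.fib (k+1) := Nat.fib_add_two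
    rw [hf, hψ]; push_cast; rw [add_mul, ih1, ih2, hf2]; push_cast; ring

lemma dio : ∀ k : ℕ, ∀ t : ℕ, 1 ≤ t → t < Nat.fib k → ∀ p : ℤ,
    |fψ| ^ k < |(t : ℝ) * fα - (p : ℝ)| := by
  intro k
  induction k using Nat.strong_induction_on with
  | _ k ih =>
    match k with
    | 0 => intro t h1 h2 p; exfalso; have : Nat.fib 0 = 0 := rfl; omega
    | 1 => intro t h1 h2 p; exfalso; have : Nat.fib 1 = 1 := rfl; omega
    | 2 => intro t h1 h2 p; exfalso; have : Nat.fib 2 = 1 := rfl; omega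
    | 3 =>
      intro t h1 h2 p
      have hf3 : Nat.fib 3 = 2 := rfl
      have ht : t = 1 := by omega
      subst ht
      simp only [Nat.cast_one, one_mul]
      have hcube : |fψ| ^ 3 = Real.sqrt 5 - 2 := by
        rw [abs_fψ]; linear_combination ((Real.sqrt 5 - 3) / 8) * s5_sq
      have habs : fα - p ≤ |fα - (p : ℝ)| := le_abs_self _
      have habs2 : (p : ℝ) - fα ≤ |fα - (p : ℝ)| := by
        rw [abs_sub_comm]; exact le_abs_self _
      rw [hcube]
      rcases le_or_gt p 0 with hp | hp
      · have hp' : (p : ℝ) ≤ 0 := by exact_mod_cast hp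
        have : Real.sqrt 5 - 2 < fα := by unfold fα; linarith [s5_ub]
        linarith
      · have hp' : (1 : ℝ) ≤ (p : ℝ) := by exact_mod_cast hp
        have : Real.sqrt 5 - 2 < 1 - fα := by unfold fα; linarith [s5_ub]
        linarith
    | (k + 4) =>
      intro t h1 h2 p
      have hf : Nat.fib (k+4) = Nat.fib (k+2) + Nat.fib (k+3) := Nat.fib_add_two
      rcases lt_or_ge t (Nat.fib (k+3)) with h | h
      · have hd := ih (k+3) (by omega) t h1 h p
        have : |fψ| ^ (k+4) < |fψ| ^ (k+3) :=
          pow_lt_pow_right_of_lt_one₀ abs_fψ_pos abs_fψ_lt_one (by omega)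
        linarith
      · set s := t - Nat.fib (k+3) with hs_def
        set q : ℤ := p - (Nat.fib (k+1) : ℤ) with hq_def
        have hts : t = s + Nat.fib (k+3) := by omega
        have hs2 : s < Nat.fib (k+2) := by omega
        have hsplit : (t : ℝ) * fα - p = ((s : ℝ) * fα - (q : ℝ)) + fψ ^ (k+3) := by
          rw [hts, hq_def]; push_cast
          rw [add_mul, fib_mul_alpha (k+1)]; push_cast; ring
        rcases Nat.eq_zero_or_pos s with hs0 | hs1
        · rw [hsplit, hs0]
          have heq : ((0 : ℕ) : ℝ) * fα - (q : ℝ) + fψ ^ (k+3) = fψ ^ (k+3) - (q : ℝ) := by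
            push_cast; ring
          rw [heq]
          rcases eq_or_ne q 0 with hq0 | hq0
          · rw [hq0]
            simp only [Int.cast_zero, sub_zero, abs_pow]
            exact pow_lt_pow_right_of_lt_one₀ abs_fψ_pos abs_fψ_lt_one (by omega)
          · have h1q : (1 : ℝ) ≤ |(q : ℝ)| := by
              rw [← Int.cast_abs]; exact_mod_cast Int.one_le_abs hq0
            have htri : |(q : ℝ)| - |fψ| ^ (k+3) ≤ |fψ ^ (k+3) - (q : ℝ)| := by
              rw [abs_sub_comm]
              have := abs_sub_abs_le_abs_sub ((q : ℝ)) (fψ ^ (k+3))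
              rw [abs_pow] at this; linarith
            have hb3 : |fψ| ^ (k+3) ≤ |fψ| ^ 3 :=
              pow_le_pow_of_le_one (abs_nonneg _) (le_of_lt abs_fψ_lt_one) (by omega)
            have hb4 : |fψ| ^ (k+4) ≤ |fψ| ^ 4 :=
              pow_le_pow_of_le_one (abs_nonneg _) (le_of_lt abs_fψ_lt_one) (by omega)
            have h3v : |fψ| ^ 3 ≤ (0.62 : ℝ) ^ 3 := pow_le_pow_left₀ (abs_nonneg _) abs_fψ_ub 3
            have h4v : |fψ| ^ 4 ≤ (0.62 : ℝ) ^ 4 := pow_le_pow_left₀ (abs_nonneg _) abs_fψ_ub 4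
            have hnum : (0.62 : ℝ) ^ 4 < 1 - (0.62 : ℝ) ^ 3 := by norm_num
            linarith
        · have hd := ih (k+2) (by omega) s hs1 hs2 q
          rw [hsplit]
          set X : ℝ := (s : ℝ) * fα - (q : ℝ) with hX
          have habs : |X| - |fψ| ^ (k+3) ≤ |X + fψ ^ (k+3)| := by
            have h0 := abs_add_le (X + fψ ^ (k+3)) (-(fψ ^ (k+3)))
            simp only [add_neg_cancel_right, abs_neg, abs_pow] at h0
            linarith
          have key : |fψ| ^ (k+2) - |fψ| ^ (k+3) = |fψ| ^ (k+4) := by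
            have e1 : |fψ| ^ (k+3) = |fψ| ^ (k+2) * |fψ| := by ring
            have e2 : |fψ| ^ (k+4) = |fψ| ^ (k+2) * |fψ| ^ 2 := by ring
            have e3 : |fψ| ^ 2 = 1 - |fψ| := by
              rw [one_sub_abs_fψ, sq_abs, fψ_sq, fα_eq]
            rw [e1, e2, e3]; ring
          linarith

lemma floor_shift (x δ : ℝ) (h : ∀ p : ℤ, |δ| < |x - (p : ℝ)|) : ⌊x + δ⌋ = ⌊x⌋ := by
  have h1 := h ⌊x⌋
  have h2 := h (⌊x⌋ + 1)
  have hf1 := Int.floor_le x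
  have hf2 := Int.lt_floor_add_one x
  have e1 : |x - (⌊x⌋ : ℝ)| = x - ⌊x⌋ := abs_of_nonneg (by linarith)
  have e2 : |x - ((⌊x⌋ + 1 : ℤ) : ℝ)| = (⌊x⌋ : ℝ) + 1 - x := by
    rw [abs_of_nonpos] <;> push_cast <;> linarith
  rw [e1] at h1; rw [e2] at h2
  have hd1 : -δ ≤ |δ| := neg_le_abs δ
  have hd2 : δ ≤ |δ| := le_abs_self δ
  rw [Int.floor_eq_iff]
  constructor
  · linarith
  · push_cast; linarith

lemma fibWord_length (j : ℕ) : (fibWord j).length = Nat.fib (j + 2) := by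
  induction j using Nat.twoStepInduction with
  | zero => rfl
  | one => rfl
  | more j ih1 ih2 =>
    show (fibWord (j+1) ++ fibWord j).length = _
    have e : Nat.fib (j+2+2) = Nat.fib (j+2) + Nat.fib (j+1+2) := Nat.fib_add_two
    rw [List.length_append, ih1, ih2]; omega

lemma fibWord_count (j : ℕ) : (fibWord j).count 1 = Nat.fib j := by
  induction j using Nat.twoStepInduction with
  | zero => rfl
  | one => rfl
  | more j ih1 ih2 =>
    show ((fibWord (j+1) ++ fibWord j).count 1) = _
    have e : Nat.fib (j+2) = Nat.fib j + Nat.fib (j+1) := Nat.fib_add_two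
    rw [List.count_append, ih1, ih2]; omega

lemma fibWord_mem (j : ℕ) : ∀ x ∈ fibWord j, x = 0 ∨ x = 1 := by
  induction j using Nat.twoStepInduction with
  | zero => simp [fibWord]
  | one => intro x hx; simp [fibWord] at hx; omega
  | more j ih1 ih2 =>
    intro x hx
    rw [show fibWord (j+2) = fibWord (j+1) ++ fibWord j from rfl, List.mem_append] at hx
    rcases hx with hx | hx
    · exact ih2 x hx
    · exact ih1 x hx

lemma fα_pos : 0 < fα := by unfold fα; linarith [s5_ub]
lemma fα_ub : fα < 0.385 := by unfold fα; linarith [s5_lb]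
lemma two_fα_lt_one : 2 * fα < 1 := by unfold fα; linarith [s5_lb]

lemma abs_pow_le_fα (j : ℕ) : |fψ ^ (j+2)| ≤ fα := by
  rw [abs_pow]
  calc |fψ| ^ (j+2) ≤ |fψ| ^ 2 :=
        pow_le_pow_of_le_one (abs_nonneg _) (le_of_lt abs_fψ_lt_one) (by omega)
    _ = fα := by rw [sq_abs, fψ_sq, ← fα_eq]

lemma floor_add_psi (j r : ℕ) (h1 : 1 ≤ r) (h2 : r ≤ Nat.fib (j+2)) :
    ⌊((r:ℝ)+1) * fα + fψ ^ (j+3)⌋ = ⌊((r:ℝ)+1) * fα⌋ := by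
  rcases lt_or_eq_of_le h2 with h | h
  · apply floor_shift
    intro p
    have hfib : 0 < Nat.fib (j+1) := Nat.fib_pos.mpr (by omega)
    have hf : Nat.fib (j+3) = Nat.fib (j+1) + Nat.fib (j+2) := Nat.fib_add_two
    have hd := dio (j+3) (r+1) (by omega) (by omega) p
    rw [abs_pow]
    have : ((r+1 : ℕ) : ℝ) = (r : ℝ) + 1 := by push_cast; ring
    rw [this] at hd
    exact hd
  · subst h
    have hsplit : ((Nat.fib (j+2) : ℝ) + 1) * fα = (Nat.fib j : ℝ) + (fα + fψ ^ (j+2)) := by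
      rw [add_mul, one_mul, fib_mul_alpha j]; ring
    have hb := abs_pow_le_fα j
    have hb1 : -fα ≤ fψ ^ (j+2) := by
      have := neg_le_abs (fψ ^ (j+2)); have := neg_abs_le (fψ ^ (j+2)); linarith
    have hb2 : fψ ^ (j+2) ≤ fα := le_trans (le_abs_self _) hb
    have hαp := fα_pos
    have hαu := fα_ub
    have h2α := two_fα_lt_one
    have hψ3 : fψ ^ (j+2) + fψ ^ (j+3) = fα * fψ ^ (j+2) := by
      have : fψ ^ (j+3) = fψ ^ (j+2) * fψ := by ring
      rw [this, fα_eq]; ring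
    have e1 : ⌊(Nat.fib j : ℝ) + (fα + fψ ^ (j+2))⌋ = (Nat.fib j : ℤ) + ⌊fα + fψ ^ (j+2)⌋ :=
      Int.floor_natCast_add _ _
    have e2 : ((Nat.fib (j+2) : ℝ) + 1) * fα + fψ ^ (j+3)
        = (Nat.fib j : ℝ) + (fα + fψ ^ (j+2) + fψ ^ (j+3)) := by rw [hsplit]; ring
    rw [e2, hsplit, Int.floor_natCast_add, e1]
    congr 1
    have f1 : ⌊fα + fψ ^ (j+2)⌋ = 0 := by
      rw [Int.floor_eq_zero_iff]
      constructor
      · linarith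
      · linarith
    have f2 : ⌊fα + fψ ^ (j+2) + fψ ^ (j+3)⌋ = 0 := by
      rw [Int.floor_eq_zero_iff]
      have : fα + fψ ^ (j+2) + fψ ^ (j+3) = fα * (1 + fψ ^ (j+2)) := by
        rw [add_assoc, hψ3]; ring
      rw [this]
      constructor
      · nlinarith
      · nlinarith
    rw [f1, f2]

lemma count_take : ∀ j m : ℕ, m ≤ Nat.fib (j+2) →
    ((((fibWord j).take m).count 1 : ℕ) : ℤ) = ⌊((m:ℝ)+1) * fα⌋ := by
  intro j
  induction j using Nat.twoStepInduction with
  | zero =>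
    intro m hm
    have hf : Nat.fib 2 = 1 := rfl
    have hαp := fα_pos
    have h2α := two_fα_lt_one
    interval_cases m
    · have : ((fibWord 0).take 0).count 1 = 0 := rfl
      rw [this]; symm
      push_cast
      rw [Int.floor_eq_zero_iff]
      constructor <;> [skip; skip] <;> norm_num <;> linarith
    · have : ((fibWord 0).take 1).count 1 = 0 := rfl
      rw [this]; symm
      push_cast
      rw [Int.floor_eq_zero_iff]
      constructor <;> norm_num <;> linarith
  | one =>
    intro m hm
    have hf : Nat.fib 3 = 2 := rfl
    have hαp := fα_pos
    have h2α := two_fα_lt_one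
    interval_cases m
    · have : ((fibWord 1).take 0).count 1 = 0 := rfl
      rw [this]; symm; push_cast
      rw [Int.floor_eq_zero_iff]
      constructor <;> norm_num <;> linarith
    · have : ((fibWord 1).take 1).count 1 = 0 := rfl
      rw [this]; symm; push_cast
      rw [Int.floor_eq_zero_iff]
      constructor <;> norm_num <;> linarith
    · have : ((fibWord 1).take 2).count 1 = 1 := rfl
      rw [this]; symm; push_cast
      have h3a : (1:ℝ) ≤ (2+1) * fα := by unfold fα; linarith [s5_ub]
      have h3b : (2+1) * fα < 2 := by unfold fα; linarith [s5_lb]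
      rw [Int.floor_eq_iff]
      constructor <;> norm_num <;> linarith
  | more j ih1 ih2 =>
    intro m hm
    have hlen : (fibWord (j+1)).length = Nat.fib (j+1+2) := fibWord_length (j+1)
    have hfib4 : Nat.fib (j+2+2) = Nat.fib (j+2) + Nat.fib (j+1+2) := Nat.fib_add_two
    rcases le_or_gt m (Nat.fib (j+1+2)) with h | h
    · have ht : (fibWord (j+2)).take m = (fibWord (j+1)).take m := by
        show ((fibWord (j+1) ++ fibWord j)).take m = _
        rw [List.take_append]
        have h0 : m - (fibWord (j+1)).length = 0 := by omega
        rw [h0]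
        simp
      rw [ht]; exact ih2 m h
    · set r := m - Nat.fib (j+1+2) with hr
      have hr1 : 1 ≤ r := by omega
      have hr2 : r ≤ Nat.fib (j+2) := by omega
      have htake : (fibWord (j+2)).take m = fibWord (j+1) ++ (fibWord j).take r := by
        show ((fibWord (j+1) ++ fibWord j)).take m = _
        rw [List.take_append, List.take_of_length_le (by omega)]
        congr 2
        omega
      rw [htake, List.count_append, fibWord_count (j+1)]
      have hc := ih1 r hr2
      have hm' : (m:ℝ) + 1 = ((Nat.fib (j+1+2) : ℝ)) + ((r:ℝ) + 1) := by
        have : m = Nat.fib (j+1+2) + r := by omega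
        rw [this]; push_cast; ring
      have hfm : ((m:ℝ)+1) * fα = (Nat.fib (j+1) : ℝ) + (((r:ℝ)+1) * fα + fψ ^ (j+3)) := by
        rw [hm', add_mul, fib_mul_alpha (j+1)]; ring
      rw [hfm, Int.floor_natCast_add, floor_add_psi j r hr1 hr2, ← hc]
      push_cast; ring

theorem fibWord_sturmian (j n : ℕ) (h : n < (fibWord j).length) :
    ((fibWord j)[n]'h : ℤ) =
      ⌊((n : ℝ) + 2) * ((3 - Real.sqrt 5) / 2)⌋ -
        ⌊((n : ℝ) + 1) * ((3 - Real.sqrt 5) / 2)⌋ := by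
  have hlen : (fibWord j).length = Nat.fib (j+2) := fibWord_length j
  have h1 := count_take j n (by omega)
  have h2 := count_take j (n+1) (by omega)
  have htake : (fibWord j).take (n+1) = (fibWord j).take n ++ [(fibWord j)[n]'h] := by
    rw [List.take_succ]
    congr
    rw [List.getElem?_eq_getElem h]
    rfl
  rw [htake, List.count_append] at h2
  have hcast : ((n+1 : ℕ) : ℝ) + 1 = (n : ℝ) + 2 := by push_cast; ring
  rw [hcast] at h2
  have hgoal : ((fibWord j)[n]'h : ℤ) = ⌊((n : ℝ) + 2) * fα⌋ - ⌊((n : ℝ) + 1) * fα⌋ := by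
    rcases fibWord_mem j _ (List.getElem_mem h) with h0 | h0
    · rw [h0]
      rw [h0] at h2
      have : List.count 1 [0] = 0 := rfl
      rw [this] at h2
      push_cast at h2 ⊢
      omega
    · rw [h0]
      rw [h0] at h2
      have : List.count 1 [1] = 1 := rfl
      rw [this] at h2
      push_cast at h2 ⊢
      omega
  exact hgoal
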